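/- Consider the (s+1)-regular PDA B_{(s,i)} on t columns (t ≥ 2, 1 ≤ s ≤ t−1) and a positive integer z. There exists a subset T of the symbol set of B_{(s,i)} such that every column of B_{(s,i)} contains at most z symbols from T, and |T| = floor(t/(s+1))·z if z < C(t−1,s), while |T| = C(t,s+1) if z ≥ C(t−1,s). -/

import Mathlib

open Finset

private lemma pda_sum_deg {t : ℕ} (T : Finset (Finset (Fin t))) :
    ∑ x : Fin t, #(T.filter (fun U => x ∈ U)) = ∑ U ∈ T, #U := by
  simp only [Finset.card_filter]
  rw [Finset.sum_comm]
  refine Finset.sum_congr rfl fun U _ => ?_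
  rw [Finset.sum_ite_mem, Finset.univ_inter, Finset.sum_const, smul_eq_mul, mul_one]

private lemma pda_card_filter_mem {t : ℕ} (j : Fin t) (k : ℕ) :
    #((Finset.powersetCard (k+1) (univ : Finset (Fin t))).filter (fun U => j ∈ U))
      = (t-1).choose k := by
  have h1 : #((univ : Finset (Fin t)).erase j) = t - 1 := by
    rw [Finset.card_erase_of_mem (Finset.mem_univ j), Finset.card_univ, Fintype.card_fin]
  rw [← h1, ← Finset.card_powersetCard k ((univ : Finset (Fin t)).erase j)]
  refine Finset.card_bij' (fun U _ => U.erase j) (fun V _ => insert j V) ?hi ?hj ?left ?right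
  case hi =>
    intro U hU
    simp only [Finset.mem_filter, Finset.mem_powersetCard_univ] at hU
    rw [Finset.mem_powersetCard]
    constructor
    · intro x hx
      rw [Finset.mem_erase] at hx ⊢
      exact ⟨hx.1, Finset.mem_univ x⟩
    · rw [Finset.card_erase_of_mem hU.2, hU.1]
      omega
  case hj =>
    intro V hV
    rw [Finset.mem_powersetCard] at hV
    have hjV : j ∉ V := fun hj => (Finset.mem_erase.mp (hV.1 hj)).1 rfl
    simp only [Finset.mem_filter, Finset.mem_powersetCard_univ]
    exact ⟨by rw [Finset.card_insert_of_notMem hjV, hV.2], Finset.mem_insert_self j V⟩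
  case left =>
    intro U hU
    simp only [Finset.mem_filter] at hU
    exact Finset.insert_erase hU.2
  case right =>
    intro V hV
    rw [Finset.mem_powersetCard] at hV
    have hjV : j ∉ V := fun hj => (Finset.mem_erase.mp (hV.1 hj)).1 rfl
    exact Finset.erase_insert hjV

/-- For the (s+1)-regular PDA B_{(s,i)} on t columns (whose
symbols are the (s+1)-subsets of [t], the symbol U appearing precisely in the
columns j ∈ U) and a positive integer z, there is a set T of symbols such that
every column contains at most z symbols of T, with
|T| = ⌊t/(s+1)⌋·z if z < C(t−1,s) and |T| = C(t,s+1) if z ≥ C(t−1,s). -/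
theorem pda_symbol_removal (t s z : ℕ) (ht : 2 ≤ t) (hs1 : 1 ≤ s)
    (hs : s ≤ t - 1) (hz : 0 < z) :
    ∃ T : Finset (Finset (Fin t)),
      (∀ U ∈ T, U.card = s + 1) ∧
      (∀ j : Fin t, (T.filter (fun U => j ∈ U)).card ≤ z) ∧
      T.card = (if z < (t - 1).choose s then (t / (s + 1)) * z
                else t.choose (s + 1)) := by
  by_cases hzc : z < (t - 1).choose s
  · -- hard case: pick a family of size m*z minimizing the overflow potential
    rw [if_pos hzc]
    set m := t / (s + 1) with hm
    set S : Finset (Finset (Fin t)) := Finset.powersetCard (s+1) univ with hS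
    -- basic numerics
    have hms : m * (s + 1) ≤ t := Nat.div_mul_le_self t (s + 1)
    have hchoose : t * (t - 1).choose s = t.choose (s + 1) * (s + 1) := by
      have h := Nat.add_one_mul_choose_eq (t - 1) s
      have ht1 : t - 1 + 1 = t := by omega
      rw [ht1] at h
      exact h
    have hScard : #S = t.choose (s + 1) := by
      rw [hS, Finset.card_powersetCard, Finset.card_univ, Fintype.card_fin]
    have hmzS : m * z ≤ #S := by
      rw [hScard]
      have h1 : m * z * (s + 1) ≤ t * z := by
        calc m * z * (s + 1) = m * (s + 1) * z := by ring
        _ ≤ t * z := Nat.mul_le_mul_right z hms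
      have h2 : t * z < t.choose (s + 1) * (s + 1) := by
        rw [← hchoose]
        exact mul_lt_mul_of_pos_left hzc (by omega : (0:ℕ) < t)
      have := lt_of_le_of_lt h1 h2
      exact le_of_lt (Nat.lt_of_mul_lt_mul_right this)
    -- candidate families
    set C : Finset (Finset (Finset (Fin t))) :=
      S.powerset.filter (fun T => #T = m * z) with hC
    have hCne : C.Nonempty := by
      obtain ⟨T0, hT0S, hT0card⟩ := Finset.exists_subset_card_eq hmzS
      exact ⟨T0, by simp [hC, Finset.mem_filter, Finset.mem_powerset, hT0S, hT0card]⟩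
    -- potential
    set Φ : Finset (Finset (Fin t)) → ℕ :=
      fun T => ∑ x : Fin t, (#(T.filter (fun U => x ∈ U)) - z) with hΦ
    obtain ⟨T, hTC, hTmin⟩ := Finset.exists_min_image C Φ hCne
    rw [hC, Finset.mem_filter, Finset.mem_powerset] at hTC
    obtain ⟨hTS, hTcard⟩ := hTC
    have hTmem : ∀ U ∈ T, #U = s + 1 := fun U hU =>
      Finset.mem_powersetCard_univ.mp (hTS hU)
    refine ⟨T, hTmem, ?_, hTcard⟩
    -- show all degrees ≤ z
    by_contra hbad
    push_neg at hbad
    obtain ⟨p, hp⟩ := hbad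
    -- sum of degrees
    have hsum : ∑ x : Fin t, #(T.filter (fun U => x ∈ U)) = (s + 1) * (m * z) := by
      rw [pda_sum_deg]
      rw [Finset.sum_congr rfl hTmem, Finset.sum_const, smul_eq_mul, hTcard, mul_comm]
    -- exists q with small degree
    have hq : ∃ q : Fin t, #(T.filter (fun U => q ∈ U)) < z := by
      by_contra hq
      push_neg at hq
      have : (t : ℕ) * z < ∑ x : Fin t, #(T.filter (fun U => x ∈ U)) := by
        have := Finset.sum_lt_sum (f := fun _ : Fin t => z)
          (g := fun x : Fin t => #(T.filter (fun U => x ∈ U)))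
          (s := univ) (fun i _ => hq i) ⟨p, Finset.mem_univ p, hp⟩
        simpa [Finset.sum_const, Finset.card_univ, mul_comm] using this
      rw [hsum] at this
      have h2 : (s + 1) * (m * z) ≤ t * z := by
        calc (s + 1) * (m * z) = m * (s + 1) * z := by ring
        _ ≤ t * z := Nat.mul_le_mul_right z hms
      omega
    obtain ⟨q, hqlt⟩ := hq
    have hpq : p ≠ q := by
      intro h; rw [h] at hp; omega
    -- split degrees
    set A : Finset (Finset (Fin t)) := T.filter (fun U => p ∈ U ∧ q ∉ U) with hA
    set B : Finset (Finset (Fin t)) := T.filter (fun U => q ∈ U ∧ p ∉ U) with hB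
    have hsplitA : #A + #(T.filter (fun U => p ∈ U ∧ q ∈ U))
        = #(T.filter (fun U => p ∈ U)) := by
      rw [hA, ← Finset.filter_filter (fun U => p ∈ U) (fun U => q ∉ U),
          ← Finset.filter_filter (fun U => p ∈ U) (fun U => q ∈ U)]
      have := Finset.card_filter_add_card_filter_not
        (s := T.filter (fun U => p ∈ U)) (fun U : Finset (Fin t) => q ∈ U)
      omega
    have hsplitB : #B + #(T.filter (fun U => p ∈ U ∧ q ∈ U))
        = #(T.filter (fun U => q ∈ U)) := by
      have hcomm : T.filter (fun U => p ∈ U ∧ q ∈ U)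
          = T.filter (fun U => q ∈ U ∧ p ∈ U) := by
        apply Finset.filter_congr; intro U _; constructor <;> exact fun h => ⟨h.2, h.1⟩
      rw [hB, hcomm, ← Finset.filter_filter (fun U => q ∈ U) (fun U => p ∉ U),
          ← Finset.filter_filter (fun U => q ∈ U) (fun U => p ∈ U)]
      have := Finset.card_filter_add_card_filter_not
        (s := T.filter (fun U => q ∈ U)) (fun U : Finset (Fin t) => p ∈ U)
      omega
    have hBA : #B < #A := by omega
    -- find a swappable U
    have hU : ∃ U ∈ A, insert q (U.erase p) ∉ T := by
      by_contra hno
      push_neg at hno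
      have hmaps : ∀ U ∈ A, insert q (U.erase p) ∈ B := by
        intro U hUA
        rw [hA, Finset.mem_filter] at hUA
        rw [hB, Finset.mem_filter]
        refine ⟨hno U (by rw [hA, Finset.mem_filter]; exact hUA), ?_, ?_⟩
        · exact Finset.mem_insert_self q _
        · simp only [Finset.mem_insert, Finset.mem_erase]
          rintro (h | ⟨h, _⟩)
          · exact hpq h
          · exact h rfl
      have hinj : Set.InjOn (fun U : Finset (Fin t) => insert q (U.erase p)) ↑A := by
        intro U hUA V hVA hUV
        simp only [Finset.mem_coe, hA, Finset.mem_filter] at hUA hVA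
        have hqU : q ∉ U.erase p := fun h => hUA.2.2 (Finset.mem_of_mem_erase h)
        have hqV : q ∉ V.erase p := fun h => hVA.2.2 (Finset.mem_of_mem_erase h)
        have : U.erase p = V.erase p := by
          have := congrArg (fun W => Finset.erase W q) hUV
          simpa [Finset.erase_insert hqU, Finset.erase_insert hqV] using this
        calc U = insert p (U.erase p) := (Finset.insert_erase hUA.2.1).symm
        _ = insert p (V.erase p) := by rw [this]
        _ = V := Finset.insert_erase hVA.2.1
      exact absurd (Finset.card_le_card_of_injOn (fun U : Finset (Fin t) => insert q (U.erase p)) hmaps hinj) (by omega)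
    obtain ⟨U, hUA, hVnotT⟩ := hU
    rw [hA, Finset.mem_filter] at hUA
    obtain ⟨hUT, hpU, hqU⟩ := hUA
    set V : Finset (Fin t) := insert q (U.erase p) with hV
    have hqUe : q ∉ U.erase p := fun h => hqU (Finset.mem_of_mem_erase h)
    have hVcard : #V = s + 1 := by
      rw [hV, Finset.card_insert_of_notMem hqUe, Finset.card_erase_of_mem hpU,
          hTmem U hUT]
      omega
    have hpV : p ∉ V := by
      simp only [hV, Finset.mem_insert, Finset.mem_erase]
      rintro (h | ⟨h, _⟩)
      · exact hpq h
      · exact h rfl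
    have hqV : q ∈ V := Finset.mem_insert_self q _
    -- the swapped family
    set T' : Finset (Finset (Fin t)) := insert V (T.erase U) with hT'
    have hVnotTe : V ∉ T.erase U := fun h => hVnotT (Finset.mem_of_mem_erase h)
    have hT'card : #T' = m * z := by
      rw [hT', Finset.card_insert_of_notMem hVnotTe, Finset.card_erase_of_mem hUT,
          hTcard]
      have : 0 < m * z := by
        rw [← hTcard]; exact Finset.card_pos.mpr ⟨U, hUT⟩
      omega
    have hT'S : T' ⊆ S := by
      intro W hW
      rw [hT', Finset.mem_insert] at hW
      rcases hW with rfl | hW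
      · rw [hS, Finset.mem_powersetCard_univ]; exact hVcard
      · exact hTS (Finset.mem_of_mem_erase hW)
    have hT'C : T' ∈ C := by
      rw [hC, Finset.mem_filter, Finset.mem_powerset]; exact ⟨hT'S, hT'card⟩
    -- degree computations
    have hfilter : ∀ x : Fin t, T'.filter (fun W => x ∈ W)
        = if x ∈ V then insert V ((T.filter (fun W => x ∈ W)).erase U)
          else (T.filter (fun W => x ∈ W)).erase U := by
      intro x
      rw [hT', Finset.filter_insert, Finset.filter_erase]
    have hdeg : ∀ x : Fin t, x ≠ p → x ≠ q →
        #(T'.filter (fun W => x ∈ W)) = #(T.filter (fun W => x ∈ W)) := by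
      intro x hxp hxq
      have hxUV : x ∈ V ↔ x ∈ U := by
        simp only [hV, Finset.mem_insert, Finset.mem_erase]
        constructor
        · rintro (h | ⟨_, h⟩)
          · exact absurd h hxq
          · exact h
        · intro h; exact Or.inr ⟨hxp, h⟩
      rw [hfilter x]
      by_cases hxU : x ∈ U
      · rw [if_pos (hxUV.mpr hxU)]
        have hUf : U ∈ T.filter (fun W => x ∈ W) := by
          rw [Finset.mem_filter]; exact ⟨hUT, hxU⟩
        have hVf : V ∉ (T.filter (fun W => x ∈ W)).erase U :=
          fun h => hVnotT (Finset.mem_filter.mp (Finset.mem_of_mem_erase h)).1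
        rw [Finset.card_insert_of_notMem hVf, Finset.card_erase_of_mem hUf]
        have : 0 < #(T.filter (fun W => x ∈ W)) := Finset.card_pos.mpr ⟨U, hUf⟩
        omega
      · rw [if_neg (fun h => hxU (hxUV.mp h))]
        rw [Finset.erase_eq_of_notMem
          (show U ∉ T.filter (fun W => x ∈ W) from fun h => hxU (Finset.mem_filter.mp h).2)]
    have hdegp : #(T'.filter (fun W => p ∈ W)) = #(T.filter (fun W => p ∈ W)) - 1 := by
      rw [hfilter p, if_neg hpV, Finset.card_erase_of_mem
        (Finset.mem_filter.mpr ⟨hUT, hpU⟩)]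
    have hdegq : #(T'.filter (fun W => q ∈ W)) = #(T.filter (fun W => q ∈ W)) + 1 := by
      rw [hfilter q, if_pos hqV]
      have hUf : U ∉ T.filter (fun W => q ∈ W) :=
        fun h => hqU (Finset.mem_filter.mp h).2
      rw [Finset.erase_eq_of_notMem hUf, Finset.card_insert_of_notMem
        (show V ∉ T.filter (fun W => q ∈ W) from fun h => hVnotT (Finset.mem_filter.mp h).1)]
    -- potential strictly decreases: contradiction
    have hΦlt : Φ T' < Φ T := by
      rw [hΦ]
      apply Finset.sum_lt_sum
      · intro x _
        by_cases hxp : x = p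
        · subst hxp; rw [hdegp]; omega
        · by_cases hxq : x = q
          · subst hxq; rw [hdegq]; omega
          · rw [hdeg x hxp hxq]
      · refine ⟨p, Finset.mem_univ p, ?_⟩
        rw [hdegp]; omega
    exact absurd (hTmin T' hT'C) (by omega)
  · -- easy case: take all (s+1)-subsets
    rw [if_neg hzc]
    push_neg at hzc
    refine ⟨Finset.powersetCard (s+1) univ, ?_, ?_, ?_⟩
    · intro U hU; exact Finset.mem_powersetCard_univ.mp hU
    · intro j
      rw [pda_card_filter_mem]
      exact hzc
    · rw [Finset.card_powersetCard, Finset.card_univ, Fintype.card_fin]
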